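/- For every n ≥ 1 and every complex (or real) z, the probability generating function vector of the occupancy count satisfies H(n,z) = (B + zA)^n · 1, where H(n,z) is the column vector with entries H_i(n,z) = Σ_{k=0}^n g_i(n,k) z^k and 1 is the all-ones column vector; equivalently, H(n,z) = (B + zA) H(n-1,z) for n ≥ 2 with H(1,z) = (B + zA)·1. -/
import Mathlib


open Matrix Finset

/-- Probability of a path of a Markov chain with transition matrix `P`. -/
noncomputable def pathProb {S : Type*} [Fintype S] (P : Matrix S S ℝ) (n : ℕ)
    (x : Fin (n + 1) → S) : ℝ :=
  ∏ m : Fin n, P (x m.castSucc) (x m.succ)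

/-- Number of indices `1 ≤ m ≤ n` with `X_m ∈ U`. -/
def occCount {S : Type*} [Fintype S] [DecidableEq S] (U : Finset S) (n : ℕ)
    (x : Fin (n + 1) → S) : ℕ :=
  (Finset.univ.filter (fun m : Fin n => x m.succ ∈ U)).card

/-- `occProb P U i n k = Pr(N_n = k | X_0 = i)`. -/
noncomputable def occProb {S : Type*} [Fintype S] [DecidableEq S]
    (P : Matrix S S ℝ) (U : Finset S) (i : S) (n k : ℕ) : ℝ :=
  ∑ x ∈ Finset.univ.filter
      (fun x : Fin (n + 1) → S => x 0 = i ∧ occCount U n x = k),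
    pathProb P n x

noncomputable def Fgen {S : Type*} [Fintype S] [DecidableEq S]
    (P : Matrix S S ℝ) (U : Finset S) (z : ℝ) (n : ℕ) (i : S) : ℝ :=
  ∑ x ∈ Finset.univ.filter (fun x : Fin (n + 1) → S => x 0 = i),
    pathProb P n x * z ^ occCount U n x

lemma cons_pathProb {S : Type*} [Fintype S] (P : Matrix S S ℝ) (n : ℕ)
    (i : S) (y : Fin (n + 1) → S) :
    pathProb P (n + 1) (Fin.cons i y) = P i (y 0) * pathProb P n y := by
  unfold pathProb
  rw [Fin.prod_univ_succ]
  congr 1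

lemma cons_occCount {S : Type*} [Fintype S] [DecidableEq S] (U : Finset S) (n : ℕ)
    (i : S) (y : Fin (n + 1) → S) :
    occCount U (n + 1) (Fin.cons i y) =
      (if y 0 ∈ U then 1 else 0) + occCount U n y := by
  unfold occCount
  rw [Finset.card_filter, Finset.card_filter, Fin.sum_univ_succ]
  simp

lemma Fgen_zero {S : Type*} [Fintype S] [DecidableEq S]
    (P : Matrix S S ℝ) (U : Finset S) (z : ℝ) (i : S) :
    Fgen P U z 0 i = 1 := by
  unfold Fgen
  have h : (Finset.univ.filter (fun x : Fin 1 → S => x 0 = i)) = {fun _ => i} := by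
    ext x
    simp [funext_iff, Fin.forall_fin_one]
  rw [h]
  simp [pathProb, occCount]

lemma Fgen_succ {S : Type*} [Fintype S] [DecidableEq S]
    (P : Matrix S S ℝ) (U : Finset S) (z : ℝ) (n : ℕ) (i : S) :
    Fgen P U z (n + 1) i =
      ∑ j, (P i j * (if j ∈ U then z else 1)) * Fgen P U z n j := by
  unfold Fgen
  calc ∑ x ∈ Finset.univ.filter (fun x : Fin (n + 2) → S => x 0 = i),
        pathProb P (n + 1) x * z ^ occCount U (n + 1) x
      = ∑ x : Fin (n + 2) → S,
          if x 0 = i then pathProb P (n + 1) x * z ^ occCount U (n + 1) x else 0 := by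
        rw [Finset.sum_filter]
    _ = ∑ p : S × (Fin (n + 1) → S),
          if p.1 = i then pathProb P (n + 1) (Fin.cons p.1 p.2) *
            z ^ occCount U (n + 1) (Fin.cons p.1 p.2) else 0 := by
        apply Fintype.sum_equiv (Fin.consEquiv (fun _ => S)).symm
        intro x
        simp [Fin.consEquiv]
    _ = ∑ j : S, ∑ y : Fin (n + 1) → S,
          if j = i then pathProb P (n + 1) (Fin.cons j y) *
            z ^ occCount U (n + 1) (Fin.cons j y) else 0 := by
        rw [Fintype.sum_prod_type]
    _ = ∑ y : Fin (n + 1) → S,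
          pathProb P (n + 1) (Fin.cons i y) * z ^ occCount U (n + 1) (Fin.cons i y) := by
        rw [Finset.sum_comm]
        simp
    _ = ∑ y : Fin (n + 1) → S,
          (P i (y 0) * (if y 0 ∈ U then z else 1)) * (pathProb P n y * z ^ occCount U n y) := by
        apply Finset.sum_congr rfl
        intro y _
        rw [cons_pathProb, cons_occCount, pow_add]
        by_cases h : y 0 ∈ U <;> simp [h] <;> ring
    _ = ∑ j, ∑ y ∈ Finset.univ.filter (fun y : Fin (n + 1) → S => y 0 = j),
          (P i (y 0) * (if y 0 ∈ U then z else 1)) * (pathProb P n y * z ^ occCount U n y) := by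
        rw [Finset.sum_fiberwise]
    _ = ∑ j, (P i j * (if j ∈ U then z else 1)) *
          ∑ y ∈ Finset.univ.filter (fun y : Fin (n + 1) → S => y 0 = j),
            pathProb P n y * z ^ occCount U n y := by
        apply Finset.sum_congr rfl
        intro j _
        rw [Finset.mul_sum]
        apply Finset.sum_congr rfl
        intro y hy
        rw [Finset.mem_filter] at hy
        rw [hy.2]

lemma Hlink {S : Type*} [Fintype S] [DecidableEq S]
    (P : Matrix S S ℝ) (U : Finset S) (z : ℝ) (n : ℕ) (i : S) :
    ∑ k ∈ Finset.range (n + 1), occProb P U i n k * z ^ k = Fgen P U z n i := by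
  unfold occProb Fgen
  rw [← Finset.sum_fiberwise_of_maps_to
    (g := fun x : Fin (n + 1) → S => occCount U n x)
    (t := Finset.range (n + 1))
    (fun x _ => by
      rw [Finset.mem_range, Nat.lt_succ_iff]
      calc occCount U n x ≤ Fintype.card (Fin n) := Finset.card_filter_le _ _
        _ = n := Fintype.card_fin n)]
  apply Finset.sum_congr rfl
  intro k _
  rw [Finset.sum_mul, Finset.filter_filter]
  apply Finset.sum_congr rfl
  intro x hx
  rw [Finset.mem_filter] at hx
  rw [hx.2.2]

theorem stmt16 {S : Type*} [Fintype S] [DecidableEq S] [Nonempty S]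
    (P : Matrix S S ℝ) (hP0 : ∀ i j, 0 ≤ P i j) (hP1 : ∀ i, ∑ j, P i j = 1)
    (U : Finset S) (A B : Matrix S S ℝ)
    (hA : ∀ i j, A i j = if j ∈ U then P i j else 0)
    (hB : ∀ i j, B i j = if j ∉ U then P i j else 0)
    (z : ℝ) :
    (∀ n : ℕ, 1 ≤ n →
      (fun i : S => ∑ k ∈ Finset.range (n + 1), occProb P U i n k * z ^ k) =
        ((B + z • A) ^ n) *ᵥ (fun _ => (1 : ℝ))) ∧
    (∀ n : ℕ, 2 ≤ n →
      (fun i : S => ∑ k ∈ Finset.range (n + 1), occProb P U i n k * z ^ k) =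
        (B + z • A) *ᵥ
          (fun i : S => ∑ k ∈ Finset.range n, occProb P U i (n - 1) k * z ^ k)) ∧
    (fun i : S => ∑ k ∈ Finset.range 2, occProb P U i 1 k * z ^ k) =
      (B + z • A) *ᵥ (fun _ => (1 : ℝ)) := by
  have hM : ∀ i j, (B + z • A) i j = P i j * (if j ∈ U then z else 1) := by
    intro i j
    simp only [Matrix.add_apply, Matrix.smul_apply, hA i j, hB i j, smul_eq_mul]
    by_cases h : j ∈ U <;> simp [h] <;> ring
  have key : ∀ n : ℕ, (fun i => Fgen P U z n i) = ((B + z • A) ^ n) *ᵥ (fun _ => (1 : ℝ)) := by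
    intro n
    induction n with
    | zero =>
      funext i
      simp [Fgen_zero, Matrix.one_mulVec]
    | succ n ih =>
      funext i
      rw [pow_succ', ← Matrix.mulVec_mulVec, ← ih, Fgen_succ]
      simp only [Matrix.mulVec, dotProduct]
      apply Finset.sum_congr rfl
      intro j _
      rw [hM]
  have hF : ∀ n : ℕ, (fun i : S => ∑ k ∈ Finset.range (n + 1), occProb P U i n k * z ^ k) =
      ((B + z • A) ^ n) *ᵥ (fun _ => (1 : ℝ)) := by
    intro n
    rw [← key]
    funext i
    exact Hlink P U z n i
  refine ⟨fun n _ => hF n, fun n hn => ?_, ?_⟩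
  · obtain ⟨m, rfl⟩ : ∃ m, n = m + 1 := ⟨n - 1, (Nat.succ_pred_eq_of_pos (by omega)).symm⟩
    rw [hF (m + 1), pow_succ', ← Matrix.mulVec_mulVec]
    simp only [Nat.add_sub_cancel]
    rw [hF m]
  · have := hF 1
    rwa [pow_one] at this
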